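/- Let N ≥ 3, α ∈ [1,2), and ζ = exp(2πi/(N−1)) ∈ ℂ. Then the complex number Σ_{j=1}^{N−2} (1−ζ^j)/|1−ζ^j|^{α+1} has zero imaginary part and strictly positive real part; in particular it is a non-vanishing real number. -/

import Mathlib

lemma crystal_aux_re_lt_one (w : ℂ) (hw : ‖w‖ = 1) (h1 : w ≠ 1) : w.re < 1 := by
  rcases lt_or_eq_of_le ((Complex.re_le_norm w).trans_eq hw) with h | h
  · exact h
  · exfalso
    apply h1
    have hsq : w.re ^ 2 + w.im ^ 2 = 1 := by
      have h2 := Complex.sq_norm w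
      rw [hw] at h2
      simpa [Complex.normSq_apply, sq] using h2.symm
    have him : w.im = 0 := by nlinarith
    exact Complex.ext (by simp [h]) (by simp [him])

/-- for `N ≥ 3`, `α ∈ [1,2)` and `ζ = e^{2πi/(N−1)}`, the complex number
`∑_{j=1}^{N−2} (1−ζʲ)/|1−ζʲ|^{α+1}` has zero imaginary part and strictly positive real
part; in particular it is a non-vanishing real number. -/
theorem crystal_sum_real_positive
    (N : ℕ) (hN : 3 ≤ N) (α : ℝ) (hα : 1 ≤ α) (hα' : α < 2) :
    (∑ j ∈ Finset.Icc 1 (N - 2),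
        (1 - Complex.exp (2 * Real.pi * Complex.I / (N - 1)) ^ j) /
          ((‖(1 : ℂ) - Complex.exp (2 * Real.pi * Complex.I / (N - 1)) ^ j‖ ^ (α + 1) : ℝ) : ℂ)).im
        = 0 ∧
    0 < (∑ j ∈ Finset.Icc 1 (N - 2),
        (1 - Complex.exp (2 * Real.pi * Complex.I / (N - 1)) ^ j) /
          ((‖(1 : ℂ) - Complex.exp (2 * Real.pi * Complex.I / (N - 1)) ^ j‖ ^ (α + 1) : ℝ) : ℂ)).re := by
  set ζ : ℂ := Complex.exp (2 * Real.pi * Complex.I / (N - 1)) with hζdef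
  set n : ℕ := N - 1 with hn
  have hn2 : 2 ≤ n := by omega
  have hNcast : ((N : ℂ) - 1) = (n : ℂ) := by
    have : (N : ℕ) = n + 1 := by omega
    rw [this]; push_cast; ring
  have hprim : IsPrimitiveRoot ζ n := by
    rw [hζdef, hNcast]
    exact Complex.isPrimitiveRoot_exp n (by omega)
  have hζn : ζ ^ n = 1 := hprim.pow_eq_one
  have hζabs : ‖ζ‖ = 1 := by
    rw [hζdef, hNcast, Complex.norm_exp]
    have h0 : (2 * (Real.pi : ℂ) * Complex.I / (n : ℂ)).re = 0 := by
      rw [Complex.div_re]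
      simp [Complex.mul_re, Complex.mul_im]
    rw [h0, Real.exp_zero]
  have habsj : ∀ j : ℕ, ‖ζ ^ j‖ = 1 := by
    intro j; rw [norm_pow, hζabs, one_pow]
  have hne1 : ∀ j ∈ Finset.Icc 1 (N - 2), ζ ^ j ≠ 1 := by
    intro j hj
    simp only [Finset.mem_Icc] at hj
    exact hprim.pow_ne_one_of_pos_of_lt (by omega) (by omega)
  have hrpos : ∀ j ∈ Finset.Icc 1 (N - 2),
      (0 : ℝ) < ‖(1 : ℂ) - ζ ^ j‖ ^ (α + 1) := by
    intro j hj
    apply Real.rpow_pos_of_pos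
    rw [norm_pos_iff, sub_ne_zero]
    exact fun h => hne1 j hj h.symm
  have hζ0 : ζ ≠ 0 := fun h => by simp [h] at hζabs
  have hconjpow : ∀ j ∈ Finset.Icc 1 (N - 2),
      (starRingEnd ℂ) (ζ ^ j) = ζ ^ (n - j) := by
    intro j hj
    simp only [Finset.mem_Icc] at hj
    have hj' : j ≤ n := by omega
    rw [← Complex.inv_eq_conj (habsj j), pow_sub₀ ζ hζ0 hj', hζn, one_mul]
  have hmem : ∀ j ∈ Finset.Icc 1 (N - 2), n - j ∈ Finset.Icc 1 (N - 2) := by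
    intro j hj
    simp only [Finset.mem_Icc] at hj ⊢
    omega
  have hnormsym : ∀ j ∈ Finset.Icc 1 (N - 2),
      ‖(1 : ℂ) - ζ ^ (n - j)‖ = ‖(1 : ℂ) - ζ ^ j‖ := by
    intro j hj
    have : (1 : ℂ) - ζ ^ (n - j) = (starRingEnd ℂ) (1 - ζ ^ j) := by
      rw [map_sub, map_one, hconjpow j hj]
    rw [this, RCLike.norm_conj]
  constructor
  · -- imaginary part is zero: sum is conjugation invariant
    rw [← Complex.conj_eq_iff_im, map_sum]
    rw [Finset.sum_nbij' (i := fun j => n - j) (j := fun j => n - j)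
      (hi := hmem) (hj := hmem)
      (left_neg := by intro a ha; simp only [Finset.mem_Icc] at ha; show n - (n - a) = a; omega)
      (right_neg := by intro a ha; simp only [Finset.mem_Icc] at ha; show n - (n - a) = a; omega)
      (h := ?_)]
    intro j hj
    rw [map_div₀, map_sub, map_one, hconjpow j hj, Complex.conj_ofReal,
      hnormsym j hj]
  · -- real part is positive
    rw [Complex.re_sum]
    apply Finset.sum_pos
    · intro j hj
      have hr := hrpos j hj
      rw [div_eq_mul_inv, ← Complex.ofReal_inv, mul_comm, Complex.re_ofReal_mul]
      apply mul_pos (inv_pos.mpr hr)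
      have : ((1 : ℂ) - ζ ^ j).re = 1 - (ζ ^ j).re := by simp
      rw [this, sub_pos]
      exact crystal_aux_re_lt_one _ (habsj j) (hne1 j hj)
    · exact ⟨1, by simp only [Finset.mem_Icc]; omega⟩
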